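/- For every r ∈ (0,1) and every κ > 0, Σ_{k=0}^∞ k^κ·r^k ≤ (1/|log r|^κ)·(2·(κ/e)^κ + Γ(κ+1)/|log r|). -/

import Mathlib

open Real
open Set


lemma aux_exp_form (κ b x : ℝ) (hx : 0 < x) :
    x ^ κ * Real.exp (-(b*x)) = Real.exp (Real.log x * κ - b * x) := by
  rw [Real.rpow_def_of_pos hx, ← Real.exp_add]; ring_nf

lemma aux_max (b κ : ℝ) (hb : 0 < b) (hκ : 0 < κ) (x : ℝ) (hx : 0 ≤ x) :
    x ^ κ * Real.exp (-(b*x)) ≤ (κ / (Real.exp 1 * b)) ^ κ := by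
  rcases eq_or_lt_of_le hx with h | hx'
  · rw [← h, Real.zero_rpow hκ.ne', zero_mul]
    positivity
  · have hM : (κ / (Real.exp 1 * b)) ^ κ = Real.exp (Real.log (κ / (Real.exp 1 * b)) * κ) := by
      rw [Real.rpow_def_of_pos (by positivity)]
    rw [aux_exp_form κ b x hx', hM, Real.exp_le_exp]
    have hlogM : Real.log (κ / (Real.exp 1 * b)) = Real.log κ - 1 - Real.log b := by
      rw [Real.log_div hκ.ne' (by positivity), Real.log_mul (Real.exp_ne_zero 1) hb.ne',
        Real.log_exp]; ring
    have key : Real.log (x * b / κ) ≤ x * b / κ - 1 :=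
      Real.log_le_sub_one_of_pos (by positivity)
    have hlogx : Real.log (x * b / κ) = Real.log x + Real.log b - Real.log κ := by
      rw [Real.log_div (by positivity) hκ.ne', Real.log_mul hx'.ne' hb.ne']
    rw [hlogx] at key
    have key2 : (Real.log x + Real.log b - Real.log κ) * κ ≤ x * b - κ := by
      have h := mul_le_mul_of_nonneg_right key hκ.le
      have h2 : (x * b / κ - 1) * κ = x * b - κ := by field_simp
      linarith [h, h2.le, h2.ge]
    rw [hlogM]
    nlinarith [key2]

lemma aux_mono (b κ : ℝ) (hb : 0 < b) (hκ : 0 < κ) (x y : ℝ) (hx : 0 < x) (hxy : x ≤ y)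
    (hy : y ≤ κ / b) :
    x ^ κ * Real.exp (-(b*x)) ≤ y ^ κ * Real.exp (-(b*y)) := by
  have hy0 : 0 < y := lt_of_lt_of_le hx hxy
  rw [aux_exp_form κ b x hx, aux_exp_form κ b y hy0, Real.exp_le_exp]
  have key : Real.log (x / y) ≤ x / y - 1 := Real.log_le_sub_one_of_pos (by positivity)
  rw [Real.log_div hx.ne' hy0.ne'] at key
  have key2 : (Real.log x - Real.log y) * κ ≤ (x / y - 1) * κ :=
    mul_le_mul_of_nonneg_right key hκ.le
  have h1 : (x / y - 1) * κ ≤ -(b * (y - x)) := by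
    rw [div_sub_one hy0.ne', div_mul_eq_mul_div, div_le_iff₀ hy0]
    have hby : b * y ≤ κ := by
      rw [le_div_iff₀ hb] at hy; linarith [hy]
    nlinarith [sub_nonneg.2 hxy, hby]
  nlinarith [key2, h1]

lemma aux_anti (b κ : ℝ) (hb : 0 < b) (hκ : 0 < κ) (x y : ℝ) (hx : κ / b ≤ x) (hxy : x ≤ y) :
    y ^ κ * Real.exp (-(b*y)) ≤ x ^ κ * Real.exp (-(b*x)) := by
  have hx0 : 0 < x := lt_of_lt_of_le (by positivity) hx
  have hy0 : 0 < y := lt_of_lt_of_le hx0 hxy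
  rw [aux_exp_form κ b x hx0, aux_exp_form κ b y hy0, Real.exp_le_exp]
  have key : Real.log (y / x) ≤ y / x - 1 := Real.log_le_sub_one_of_pos (by positivity)
  rw [Real.log_div hy0.ne' hx0.ne'] at key
  have key2 : (Real.log y - Real.log x) * κ ≤ (y / x - 1) * κ :=
    mul_le_mul_of_nonneg_right key hκ.le
  have h1 : (y / x - 1) * κ ≤ b * (y - x) := by
    rw [div_sub_one hx0.ne', div_mul_eq_mul_div, div_le_iff₀ hx0]
    have hbx : κ ≤ b * x := by
      rw [div_le_iff₀ hb] at hx; linarith [hx]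
    nlinarith [sub_nonneg.2 hxy, hbx]
  nlinarith [key2, h1]

lemma aux_integrable (b κ : ℝ) (hb : 0 < b) (hκ : 0 < κ) :
    MeasureTheory.IntegrableOn (fun x : ℝ => x ^ κ * Real.exp (-(b*x))) (Ioi 0) := by
  have := integrableOn_rpow_mul_exp_neg_mul_rpow (p := 1) (s := κ) (b := b)
    (by linarith) zero_lt_one hb
  refine this.congr_fun (fun x hx => ?_) measurableSet_Ioi
  beta_reduce; rw [Real.rpow_one]; ring_nf

lemma aux_integral (b κ : ℝ) (hb : 0 < b) (hκ : 0 < κ) :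
    ∫ x in Ioi (0:ℝ), x ^ κ * Real.exp (-(b*x)) = (1/b) ^ (κ+1) * Real.Gamma (κ+1) := by
  have := Real.integral_rpow_mul_exp_neg_mul_Ioi (a := κ+1) (r := b) (by linarith) hb
  rw [← this]
  congr 1 with x
  rw [add_sub_cancel_right]
lemma aux_partial (b κ : ℝ) (hb : 0 < b) (hκ : 0 < κ) (n : ℕ) :
    ∑ k ∈ Finset.range n, (k:ℝ) ^ κ * Real.exp (-(b*k)) ≤
      2 * (κ / (Real.exp 1 * b)) ^ κ + (1/b) ^ (κ+1) * Real.Gamma (κ+1) := by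
  set f : ℝ → ℝ := fun x => x ^ κ * Real.exp (-(b*x)) with hf
  set c : ℝ := κ / b with hc
  set m : ℕ := ⌊c⌋₊ with hm
  have hc0 : 0 < c := by positivity
  have hmc : (m:ℝ) ≤ c := Nat.floor_le hc0.le
  have hcm : c < (m:ℝ) + 1 := Nat.lt_floor_add_one c
  set M : ℝ := (κ / (Real.exp 1 * b)) ^ κ with hM
  have hfnn : ∀ k : ℕ, 0 ≤ f k := by
    intro k
    have hk : (0:ℝ) ≤ (k:ℝ) := Nat.cast_nonneg k
    simp only [hf]
    positivity
  have hmax : ∀ k : ℕ, f k ≤ M := fun k => aux_max b κ hb hκ _ (Nat.cast_nonneg k)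
  have hM0 : 0 ≤ M := le_trans (hfnn 0) (hmax 0)
  show ∑ k ∈ Finset.range n, f k ≤ 2 * M + (1/b) ^ (κ+1) * Real.Gamma (κ+1)
  -- step 1 : enlarge the sum
  have step1 : ∑ k ∈ Finset.range n, f k ≤ ∑ k ∈ Finset.range (m+2+n), f k := by
    apply Finset.sum_le_sum_of_subset_of_nonneg
    · exact Finset.range_subset_range.mpr (by omega)
    · intro k _ _; exact hfnn k
  -- split
  have hsplit : (∑ k ∈ Finset.Ico 0 (m+2), f k) + ∑ k ∈ Finset.Ico (m+2) (m+2+n), f k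
      = ∑ k ∈ Finset.range (m+2+n), f k := by
    rw [Finset.sum_Ico_consecutive _ (by omega) (by omega), Finset.range_eq_Ico]
  -- Part A
  have partA : ∑ k ∈ Finset.Ico 0 (m+2), f k ≤ 2 * M + ∫ x in Set.Ioc (1:ℝ) (m:ℝ), f x := by
    rcases Nat.eq_zero_or_pos m with hm0 | hm1
    · rw [hm0]
      have hIco : Finset.Ico (0:ℕ) (0+2) = {0, 1} := by decide
      rw [hIco, Finset.sum_insert (by decide), Finset.sum_singleton]
      have h0 : f ((0:ℕ):ℝ) = 0 := by
        simp only [hf, Nat.cast_zero]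
        rw [Real.zero_rpow hκ.ne']; ring
      rw [show ((0:ℕ):ℝ) = 0 from Nat.cast_zero,
        Set.Ioc_eq_empty (by norm_num : ¬ (1:ℝ) < 0), MeasureTheory.setIntegral_empty]
      have := hmax 1
      push_cast at this h0 ⊢
      linarith
    · -- m ≥ 1
      have h1m : ((1:ℕ):ℝ) ≤ (m:ℝ) := by exact_mod_cast hm1
      have e1 : (∑ k ∈ Finset.Ico (0:ℕ) 1, f k) + (∑ k ∈ Finset.Ico 1 m, f k)
            + ∑ k ∈ Finset.Ico m (m+2), f k = ∑ k ∈ Finset.Ico 0 (m+2), f k := by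
        rw [Finset.sum_Ico_consecutive _ (by omega) (by omega),
          Finset.sum_Ico_consecutive _ (by omega) (by omega)]
      have e2 : ∑ k ∈ Finset.Ico (0:ℕ) 1, f k = f ((0:ℕ):ℝ) := by
        rw [show Finset.Ico (0:ℕ) 1 = {0} by decide, Finset.sum_singleton]
      have e0 : f ((0:ℕ):ℝ) = 0 := by
        simp only [hf, Nat.cast_zero]
        rw [Real.zero_rpow hκ.ne']; ring
      have e3 : ∑ k ∈ Finset.Ico m (m+2), f k ≤ 2 * M := by
        have hIco2 : Finset.Ico m (m+2) = {m, m+1} := by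
          ext k; simp only [Finset.mem_Ico, Finset.mem_insert, Finset.mem_singleton]; omega
        rw [hIco2, Finset.sum_insert (by simp only [Finset.mem_singleton]; omega),
          Finset.sum_singleton]
        linarith [hmax m, hmax (m+1)]
      have e4 : ∑ k ∈ Finset.Ico 1 m, f k ≤ ∫ x in Set.Ioc (1:ℝ) (m:ℝ), f x := by
        have hmono : MonotoneOn f (Set.Icc ((1:ℕ):ℝ) ((m:ℕ):ℝ)) := by
          intro x hx y hy hxy
          refine aux_mono b κ hb hκ x y (lt_of_lt_of_le ?_ hx.1) hxy (le_trans hy.2 hmc)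
          norm_num
        have key := MonotoneOn.sum_le_integral_Ico hm1 hmono
        rw [intervalIntegral.integral_of_le h1m] at key
        rw [show ((1:ℕ):ℝ) = 1 from Nat.cast_one] at key
        exact key
      linarith [e1, e2, e0, e3, e4]
  -- Part B
  have partB : ∑ k ∈ Finset.Ico (m+2) (m+2+n), f k ≤
      ∫ x in Set.Ioc ((m:ℝ)+1) ((m:ℝ)+1+(n:ℝ)), f x := by
    have hanti : AntitoneOn f (Set.Icc ((m:ℝ)+1) ((m:ℝ)+1+(n:ℕ))) := by
      intro x hx y hy hxy
      exact aux_anti b κ hb hκ x y (le_trans hcm.le hx.1) hxy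
    have key := AntitoneOn.sum_le_integral (x₀ := (m:ℝ)+1) (a := n) hanti
    have e5 : ∑ k ∈ Finset.Ico (m+2) (m+2+n), f k =
        ∑ i ∈ Finset.range n, f ((m:ℝ) + 1 + ((i + 1 : ℕ) : ℝ)) := by
      rw [Finset.sum_Ico_eq_sum_range]
      simp only [Nat.add_sub_cancel_left]
      apply Finset.sum_congr rfl
      intro i _
      congr 1
      push_cast
      ring
    rw [e5]
    calc ∑ i ∈ Finset.range n, f ((m:ℝ) + 1 + ((i + 1 : ℕ) : ℝ))
        ≤ ∫ x in ((m:ℝ)+1)..((m:ℝ)+1+(n:ℕ)), f x := key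
      _ = ∫ x in Set.Ioc ((m:ℝ)+1) ((m:ℝ)+1+(n:ℝ)), f x := by
          rw [intervalIntegral.integral_of_le (le_add_of_nonneg_right (Nat.cast_nonneg n))]
  -- combine integrals
  have hint : MeasureTheory.IntegrableOn f (Set.Ioi 0) := aux_integrable b κ hb hκ
  have hsub1 : Set.Ioc (1:ℝ) (m:ℝ) ⊆ Set.Ioi (0:ℝ) := fun x hx => lt_trans zero_lt_one hx.1
  have hsub2 : Set.Ioc ((m:ℝ)+1) ((m:ℝ)+1+(n:ℝ)) ⊆ Set.Ioi (0:ℝ) := fun x hx =>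
    lt_of_le_of_lt (by positivity) hx.1
  have hdisj : Disjoint (Set.Ioc (1:ℝ) (m:ℝ)) (Set.Ioc ((m:ℝ)+1) ((m:ℝ)+1+(n:ℝ))) := by
    apply Set.disjoint_left.mpr
    intro x hx1 hx2
    have h1 := hx1.2
    have h2 := hx2.1
    linarith
  have hunion : (∫ x in Set.Ioc (1:ℝ) (m:ℝ), f x)
        + (∫ x in Set.Ioc ((m:ℝ)+1) ((m:ℝ)+1+(n:ℝ)), f x)
      = ∫ x in (Set.Ioc (1:ℝ) (m:ℝ) ∪ Set.Ioc ((m:ℝ)+1) ((m:ℝ)+1+(n:ℝ))), f x := by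
    rw [MeasureTheory.setIntegral_union hdisj measurableSet_Ioc
      (hint.mono_set hsub1) (hint.mono_set hsub2)]
  have hmono_int : (∫ x in (Set.Ioc (1:ℝ) (m:ℝ) ∪ Set.Ioc ((m:ℝ)+1) ((m:ℝ)+1+(n:ℝ))), f x)
      ≤ ∫ x in Set.Ioi (0:ℝ), f x := by
    apply MeasureTheory.setIntegral_mono_set hint
    · filter_upwards [MeasureTheory.ae_restrict_mem measurableSet_Ioi] with x hx
      have hx0 : (0:ℝ) < x := hx
      simp only [hf]; positivity
    · exact HasSubset.Subset.eventuallyLE (Set.union_subset hsub1 hsub2)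
  have hval : ∫ x in Set.Ioi (0:ℝ), f x = (1/b) ^ (κ+1) * Real.Gamma (κ+1) :=
    aux_integral b κ hb hκ
  calc ∑ k ∈ Finset.range n, f k ≤ ∑ k ∈ Finset.range (m+2+n), f k := step1
    _ = (∑ k ∈ Finset.Ico 0 (m+2), f k) + ∑ k ∈ Finset.Ico (m+2) (m+2+n), f k := hsplit.symm
    _ ≤ (2 * M + ∫ x in Set.Ioc (1:ℝ) (m:ℝ), f x)
          + ∫ x in Set.Ioc ((m:ℝ)+1) ((m:ℝ)+1+(n:ℝ)), f x := add_le_add partA partB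
    _ ≤ 2 * M + ∫ x in Set.Ioi (0:ℝ), f x := by
        rw [add_assoc, hunion]
        exact add_le_add_right hmono_int _
    _ = 2 * M + (1/b) ^ (κ+1) * Real.Gamma (κ+1) := by rw [hval]

/-- For every `r ∈ (0,1)` and every `κ > 0`,
`Σ_{k=0}^∞ k^κ r^k ≤ (1/|log r|^κ)(2(κ/e)^κ + Γ(κ+1)/|log r|)` (the sum is taken in
`[0,∞]` so that no summability assumption is needed; `0^κ = 0` for `κ > 0`). -/
theorem statement19 (r : ℝ) (hr : r ∈ Set.Ioo (0 : ℝ) 1) (κ : ℝ) (hκ : 0 < κ) :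
    ∑' k : ℕ, ENNReal.ofReal ((k : ℝ) ^ κ * r ^ k) ≤
      ENNReal.ofReal ((1 / |Real.log r| ^ κ) *
        (2 * (κ / Real.exp 1) ^ κ + Real.Gamma (κ + 1) / |Real.log r|)) := by
  obtain ⟨hr0, hr1⟩ := hr
  set b : ℝ := -Real.log r with hbdef
  have hlogneg : Real.log r < 0 := Real.log_neg hr0 hr1
  have hb : 0 < b := by simp only [hbdef]; linarith
  have habs : |Real.log r| = b := by rw [abs_of_neg hlogneg]
  have hterm : ∀ k : ℕ, (k:ℝ) ^ κ * r ^ k = (k:ℝ) ^ κ * Real.exp (-(b*(k:ℝ))) := by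
    intro k
    congr 1
    rw [show -(b*(k:ℝ)) = (k:ℝ) * Real.log r by simp only [hbdef]; ring,
      Real.exp_nat_mul, Real.exp_log hr0]
  have htermnn : ∀ k : ℕ, 0 ≤ (k:ℝ) ^ κ * r ^ k := by
    intro k
    have hk : (0:ℝ) ≤ (k:ℝ) := Nat.cast_nonneg k
    positivity
  -- rewrite RHS
  have hRHS : (1 / |Real.log r| ^ κ) *
        (2 * (κ / Real.exp 1) ^ κ + Real.Gamma (κ + 1) / |Real.log r|)
      = 2 * (κ / (Real.exp 1 * b)) ^ κ + (1/b) ^ (κ+1) * Real.Gamma (κ+1) := by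
    rw [habs]
    have hbκ : (0:ℝ) < b ^ κ := Real.rpow_pos_of_pos hb κ
    have e1 : (κ / (Real.exp 1 * b)) ^ κ = (κ / Real.exp 1) ^ κ / b ^ κ := by
      rw [← div_div, Real.div_rpow (by positivity) hb.le]
    have e2 : (1/b) ^ (κ+1) = 1 / (b ^ κ * b) := by
      rw [Real.div_rpow zero_le_one hb.le, Real.one_rpow, Real.rpow_add hb, Real.rpow_one]
    rw [e1, e2]
    field_simp
  rw [hRHS]
  -- bound the tsum by partial sums
  rw [ENNReal.tsum_eq_iSup_sum]
  apply iSup_le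
  intro s
  obtain ⟨n, hn⟩ := s.exists_nat_subset_range
  calc ∑ k ∈ s, ENNReal.ofReal ((k:ℝ) ^ κ * r ^ k)
      ≤ ∑ k ∈ Finset.range n, ENNReal.ofReal ((k:ℝ) ^ κ * r ^ k) :=
        Finset.sum_le_sum_of_subset hn
    _ = ENNReal.ofReal (∑ k ∈ Finset.range n, (k:ℝ) ^ κ * r ^ k) :=
        (ENNReal.ofReal_sum_of_nonneg (fun k _ => htermnn k)).symm
    _ ≤ ENNReal.ofReal (2 * (κ / (Real.exp 1 * b)) ^ κ + (1/b) ^ (κ+1) * Real.Gamma (κ+1)) := by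
        apply ENNReal.ofReal_le_ofReal
        calc ∑ k ∈ Finset.range n, (k:ℝ) ^ κ * r ^ k
            = ∑ k ∈ Finset.range n, (k:ℝ) ^ κ * Real.exp (-(b*(k:ℝ))) :=
              Finset.sum_congr rfl (fun k _ => hterm k)
          _ ≤ _ := aux_partial b κ hb hκ n
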